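/- Let R be an integral domain of characteristic zero and let f_1, …, f_n ∈ R[x_1,…,x_n] be polynomials such that the determinant of the Jacobian matrix J(F) = (∂f_i/∂x_j)_{1≤i,j≤n} is a nonzero constant in R, and Q(R)[f_i] ∩ R[x_1,…,x_n] = R[f_i] for each 1 ≤ i ≤ n. Then each f_i is a closed polynomial. -/

import Mathlib

open MvPolynomial

namespace ClosedAux


/-- Coefficient formula for partial derivatives. -/
lemma coeff_pderiv {R : Type*} [CommSemiring R] {n : ℕ} (k : Fin n) (p : MvPolynomial (Fin n) R)
    (m : Fin n →₀ ℕ) :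
    coeff m (pderiv k p) = coeff (m + Finsupp.single k 1) p * ((m k : R) + 1) := by
  classical
  induction p using MvPolynomial.induction_on' with
  | monomial s a =>
    rw [pderiv_monomial, coeff_monomial, coeff_monomial]
    by_cases h : s = m + Finsupp.single k 1
    · subst h
      have h1 : m + Finsupp.single k 1 - Finsupp.single k 1 = m := by
        exact add_tsub_cancel_right m (Finsupp.single k 1)
      rw [if_pos h1, if_pos rfl]
      congr 1
      rw [Finsupp.add_apply, Finsupp.single_eq_same]
      push_cast
      ring
    · rw [if_neg h]
      by_cases h2 : s - Finsupp.single k 1 = m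
      · rw [if_pos h2]
        by_cases h3 : s k = 0
        · rw [h3]; simp
        · exfalso
          apply h
          have hle : Finsupp.single k 1 ≤ s := Finsupp.single_le_iff.mpr (by omega)
          rw [← h2, tsub_add_cancel_of_le hle]
      · rw [if_neg h2, zero_mul]
  | add p q hp hq =>
    rw [map_add, coeff_add, hp, hq, coeff_add, add_mul]

lemma totalDegree_pderiv_lt {R : Type*} [CommSemiring R] {n : ℕ} (k : Fin n)
    {p : MvPolynomial (Fin n) R} (h : pderiv k p ≠ 0) :
    (pderiv k p).totalDegree < p.totalDegree := by
  have key : ∀ m ∈ (pderiv k p).support, (m.sum fun _ e => e) + 1 ≤ p.totalDegree := by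
    intro m hm
    rw [mem_support_iff, coeff_pderiv] at hm
    have h1 : coeff (m + Finsupp.single k 1) p ≠ 0 := by
      intro h0; rw [h0, zero_mul] at hm; exact hm rfl
    have h2 := le_totalDegree (p := p) (mem_support_iff.mpr h1)
    rwa [Finsupp.sum_add_index' (fun _ => rfl) (fun _ _ _ => rfl),
      Finsupp.sum_single_index rfl] at h2
  obtain ⟨m0, hm0⟩ : (pderiv k p).support.Nonempty := by
    rw [Finset.nonempty_iff_ne_empty, Ne, MvPolynomial.support_eq_empty]; exact h
  have hpos : 0 < p.totalDegree := by have := key m0 hm0; omega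
  show (pderiv k p).support.sup (fun s => s.sum fun _ e => e) < p.totalDegree
  rw [Finset.sup_lt_iff (by simpa using hpos)]
  intro m hm
  have := key m hm
  omega

lemma eq_C_of_pderiv_eq_zero {K : Type*} [Field K] [CharZero K] {n : ℕ}
    {p : MvPolynomial (Fin n) K} (h : ∀ k, pderiv k p = 0) : p = C (coeff 0 p) := by
  classical
  ext m
  rw [coeff_C]
  by_cases hm : 0 = m
  · rw [if_pos hm, ← hm]
  · rw [if_neg hm]
    by_contra hc
    have hmne : m ≠ 0 := fun h' => hm h'.symm
    obtain ⟨k, hk⟩ : ∃ k, m k ≠ 0 := by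
      by_contra hall; push_neg at hall
      exact hmne (Finsupp.ext fun a => hall a)
    have h1 : (1:ℕ) ≤ m k := by omega
    have hle : Finsupp.single k 1 ≤ m := Finsupp.single_le_iff.mpr h1
    have hcp := coeff_pderiv k p (m - Finsupp.single k 1)
    rw [h k, coeff_zero, tsub_add_cancel_of_le hle] at hcp
    have h2 : ((((m - Finsupp.single k 1 : Fin n →₀ ℕ)) k : ℕ) : K) + 1 = ((m k : ℕ) : K) := by
      rw [Finsupp.tsub_apply, Finsupp.single_eq_same, Nat.cast_sub h1]
      push_cast
      ring
    rw [h2] at hcp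
    have h3 : ((m k : ℕ) : K) ≠ 0 := Nat.cast_ne_zero.mpr hk
    exact hc ((mul_eq_zero.mp hcp.symm).resolve_right h3)

lemma pderiv_pderiv_comm {R : Type*} [CommSemiring R] {n : ℕ} (k l : Fin n)
    (p : MvPolynomial (Fin n) R) :
    pderiv k (pderiv l p) = pderiv l (pderiv k p) := by
  classical
  rcases eq_or_ne k l with rfl | hkl
  · rfl
  induction p using MvPolynomial.induction_on' with
  | monomial s a =>
    rw [pderiv_monomial, pderiv_monomial, pderiv_monomial, pderiv_monomial]
    rw [tsub_right_comm]
    congr 1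
    rw [Finsupp.tsub_apply, Finsupp.tsub_apply,
      Finsupp.single_eq_of_ne' hkl.symm, Finsupp.single_eq_of_ne' hkl, tsub_zero, tsub_zero]
    ring
  | add p q hp hq => rw [map_add, map_add, hp, hq, map_add, map_add]



lemma degree_sum_add {n : ℕ} (u v : Fin n →₀ ℕ) :
    ((u + v).sum fun _ e => e) = (u.sum fun _ e => e) + (v.sum fun _ e => e) :=
  Finsupp.sum_add_index' (fun _ => rfl) (fun _ _ _ => rfl)

set_option maxHeartbeats 1000000 in
lemma add_totalDegree_le_mul {K : Type*} [CommRing K] [IsDomain K] {n : ℕ}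
    {a b : MvPolynomial (Fin n) K} (ha : a ≠ 0) (hb : b ≠ 0) :
    a.totalDegree + b.totalDegree ≤ (a * b).totalDegree := by
  obtain ⟨m0, hm0, hm0'⟩ := Finset.exists_mem_eq_sup a.support
    (by rwa [Finset.nonempty_iff_ne_empty, Ne, MvPolynomial.support_eq_empty])
    (fun m => m.sum fun _ e => e)
  obtain ⟨m1, hm1, hm1'⟩ := Finset.exists_mem_eq_sup b.support
    (by rwa [Finset.nonempty_iff_ne_empty, Ne, MvPolynomial.support_eq_empty])
    (fun m => m.sum fun _ e => e)
  set Sa := a.support.filter (fun m => (m.sum fun _ e => e) = a.totalDegree) with hSa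
  set Sb := b.support.filter (fun m => (m.sum fun _ e => e) = b.totalDegree) with hSb
  have hSane : Sa.Nonempty := ⟨m0, Finset.mem_filter.mpr ⟨hm0, hm0'.symm⟩⟩
  have hSbne : Sb.Nonempty := ⟨m1, Finset.mem_filter.mpr ⟨hm1, hm1'.symm⟩⟩
  obtain ⟨ma, hmaS, hmaMax⟩ := Finset.exists_max_image Sa toLex hSane
  obtain ⟨mb, hmbS, hmbMax⟩ := Finset.exists_max_image Sb toLex hSbne
  have hmaa := Finset.mem_filter.mp hmaS
  have hmbb := Finset.mem_filter.mp hmbS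
  have hcoeff : coeff (ma + mb) (a * b) = coeff ma a * coeff mb b := by
    rw [coeff_mul]
    apply Finset.sum_eq_single (ma, mb)
    · rintro ⟨u, v⟩ huv hne
      simp only [Finset.HasAntidiagonal.mem_antidiagonal] at huv
      by_contra h0
      have hu : u ∈ a.support := mem_support_iff.mpr (left_ne_zero_of_mul h0)
      have hv : v ∈ b.support := mem_support_iff.mpr (right_ne_zero_of_mul h0)
      have hdu : (u.sum fun _ e => e) ≤ a.totalDegree := le_totalDegree hu
      have hdv : (v.sum fun _ e => e) ≤ b.totalDegree := le_totalDegree hv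
      have hsum : (u.sum fun _ e => e) + (v.sum fun _ e => e)
          = a.totalDegree + b.totalDegree := by
        rw [← degree_sum_add, huv, degree_sum_add, hmaa.2, hmbb.2]
      have hdu' : (u.sum fun _ e => e) = a.totalDegree := by omega
      have hdv' : (v.sum fun _ e => e) = b.totalDegree := by omega
      have hlu : toLex u ≤ toLex ma := hmaMax u (Finset.mem_filter.mpr ⟨hu, hdu'⟩)
      have hlv : toLex v ≤ toLex mb := hmbMax v (Finset.mem_filter.mpr ⟨hv, hdv'⟩)
      have hadd : toLex u + toLex v = toLex ma + toLex mb := by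
        rw [← toLex_add, ← toLex_add, huv]
      have hux : u = ma := by
        rcases hlu.lt_or_eq with hlt | he
        · exact absurd hadd (ne_of_lt (add_lt_add_of_lt_of_le hlt hlv))
        · exact toLex.injective he
      subst hux
      have hvx : v = mb := by
        have : toLex u + toLex v = toLex u + toLex mb := hadd
        exact toLex.injective (add_left_cancel this)
      exact hne (by rw [hvx])
    · intro hnot
      simp only [Finset.HasAntidiagonal.mem_antidiagonal] at hnot
      exact absurd trivial hnot
  have hmem : (ma + mb) ∈ (a * b).support := by
    rw [mem_support_iff, hcoeff]
    exact mul_ne_zero (mem_support_iff.mp hmaa.1) (mem_support_iff.mp hmbb.1)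
  have := le_totalDegree hmem
  rwa [degree_sum_add, hmaa.2, hmbb.2] at this

lemma derivation_eval {K : Type*} [CommRing K] {A : Type*} [CommRing A] [Algebra K A]
    (D : Derivation K A A) (q : Polynomial A) (G : A) (hq : ∀ m, D (q.coeff m) = 0) :
    D (q.eval G) = q.derivative.eval G * D G := by
  classical
  rw [Polynomial.eval_eq_sum, Polynomial.sum_def, map_sum,
    Polynomial.derivative_apply, Polynomial.sum_def, Polynomial.eval_finset_sum,
    Finset.sum_mul]
  apply Finset.sum_congr rfl
  intro m _
  rw [D.leibniz, hq m, smul_zero, add_zero, D.leibniz_pow,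
    Polynomial.eval_mul, Polynomial.eval_C, Polynomial.eval_pow, Polynomial.eval_X]
  simp only [smul_eq_mul, nsmul_eq_mul]
  ring

lemma deriv_zero_of_integral {K : Type*} [Field K] [CharZero K] {A : Type*} [CommRing A]
    [IsDomain A] [Algebra K A] (D : Derivation K A A) (S : Subalgebra K A)
    (hS : ∀ s ∈ S, D s = 0) (G : A)
    (hex0 : ∃ q : Polynomial A, q.Monic ∧ (∀ m, q.coeff m ∈ S) ∧ q.eval G = 0) :
    D G = 0 := by
  classical
  have hex : ∃ d, ∃ q : Polynomial A,
      q.Monic ∧ (∀ m, q.coeff m ∈ S) ∧ q.eval G = 0 ∧ q.natDegree = d := by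
    obtain ⟨q, h1, h2, h3⟩ := hex0
    exact ⟨q.natDegree, q, h1, h2, h3, rfl⟩
  set d0 := Nat.find hex with hd0
  obtain ⟨q, hmon, hcoeff, heval, hdeg⟩ := Nat.find_spec hex
  rw [← hd0] at hdeg
  have hd1 : 1 ≤ d0 := by
    by_contra hcon
    have h0 : q.natDegree = 0 := by omega
    have hq1 : q = 1 := hmon.natDegree_eq_zero.mp h0
    rw [hq1, Polynomial.eval_one] at heval
    exact one_ne_zero heval
  have hD := derivation_eval D q G (fun m => hS _ (hcoeff m))
  rw [heval, map_zero] at hD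
  rcases mul_eq_zero.mp hD.symm with h | h
  · exfalso
    set q2 : Polynomial A := Polynomial.C (algebraMap K A ((d0 : K))⁻¹) * q.derivative with hq2
    have hc2 : ∀ m, q2.coeff m ∈ S := by
      intro m
      rw [hq2, Polynomial.coeff_C_mul, Polynomial.coeff_derivative]
      exact S.mul_mem (S.algebraMap_mem _)
        (S.mul_mem (hcoeff _) (S.add_mem (S.natCast_mem m) S.one_mem))
    have hq0 : q.coeff d0 = 1 := by rw [← hdeg]; exact hmon.coeff_natDegree
    have hcoeffd : q.derivative.coeff (d0 - 1) = (d0 : A) := by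
      have he : d0 - 1 + 1 = d0 := by omega
      rw [Polynomial.coeff_derivative, he, hq0, one_mul,
        ← Nat.cast_one (R := A), ← Nat.cast_add, he]
    have hne : ((d0 : ℕ) : K) ≠ 0 := Nat.cast_ne_zero.mpr (by omega)
    have hc2top : q2.coeff (d0 - 1) = 1 := by
      rw [hq2, Polynomial.coeff_C_mul, hcoeffd, ← map_natCast (algebraMap K A) d0,
        ← map_mul, inv_mul_cancel₀ hne, map_one]
    have hdeg2 : q2.natDegree ≤ d0 - 1 := by
      refine le_trans (Polynomial.natDegree_C_mul_le _ _) ?_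
      have := Polynomial.natDegree_derivative_le q
      omega
    have hmon2 : q2.Monic := Polynomial.monic_of_natDegree_le_of_coeff_eq_one _ hdeg2 hc2top
    have heval2 : q2.eval G = 0 := by rw [hq2, Polynomial.eval_C_mul, h, mul_zero]
    have hdeg2' : q2.natDegree = d0 - 1 :=
      le_antisymm hdeg2 (Polynomial.le_natDegree_of_ne_zero (by rw [hc2top]; exact one_ne_zero))
    exact Nat.find_min hex (show d0 - 1 < d0 by omega) ⟨q2, hmon2, hc2, heval2, hdeg2'⟩
  · exact h



lemma mem_adjoin_of_pderiv_rel {K : Type*} [Field K] [CharZero K] {n : ℕ}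
    (F : MvPolynomial (Fin n) K) (b : Fin n → MvPolynomial (Fin n) K) {c : K} (hc : c ≠ 0)
    (hb : ∑ k, b k * pderiv k F = C c) :
    ∀ (d : ℕ) (G u : MvPolynomial (Fin n) K), G.totalDegree ≤ d →
      (∀ k, pderiv k G = u * pderiv k F) → G ∈ Algebra.adjoin K {F} := by
  intro d
  induction d using Nat.strong_induction_on with
  | _ d IH =>
  intro G u hdeg hrel
  by_cases hu0 : u = 0
  · have hz : ∀ k, pderiv k G = 0 := by intro k; rw [hrel k, hu0, zero_mul]
    rw [eq_C_of_pderiv_eq_zero hz, ← MvPolynomial.algebraMap_eq]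
    exact Subalgebra.algebraMap_mem _ _
  · have hFk : ∃ k0, pderiv k0 F ≠ 0 := by
      by_contra hall
      push_neg at hall
      apply hc
      have hz : C (σ := Fin n) c = 0 := by
        rw [← hb]
        apply Finset.sum_eq_zero
        intro k _
        rw [hall k, mul_zero]
      have := MvPolynomial.C_injective (Fin n) K (by rw [hz, map_zero] : C c = C (0 : K))
      exact this
    obtain ⟨k0, hk0⟩ := hFk
    have hGk0 : pderiv k0 G ≠ 0 := by rw [hrel k0]; exact mul_ne_zero hu0 hk0
    have hdu : u.totalDegree < G.totalDegree := by
      have h1 := add_totalDegree_le_mul hu0 hk0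
      rw [← hrel k0] at h1
      have h2 := totalDegree_pderiv_lt k0 hGk0
      omega
    have hsym : ∀ k l : Fin n, pderiv l u * pderiv k F = pderiv k u * pderiv l F := by
      intro k l
      have e1 : pderiv l (pderiv k G)
          = pderiv l u * pderiv k F + u * pderiv l (pderiv k F) := by
        rw [hrel k, pderiv_mul]
      have e2 : pderiv k (pderiv l G)
          = pderiv k u * pderiv l F + u * pderiv k (pderiv l F) := by
        rw [hrel l, pderiv_mul]
      have e5 : pderiv l u * pderiv k F + u * pderiv l (pderiv k F)
          = pderiv k u * pderiv l F + u * pderiv k (pderiv l F) := by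
        rw [← e1, ← e2, pderiv_pderiv_comm]
      rw [pderiv_pderiv_comm l k F] at e5
      exact add_right_cancel e5
    set v := C c⁻¹ * ∑ l, b l * pderiv l u with hv
    have hvrel : ∀ k, pderiv k u = v * pderiv k F := by
      intro k
      have h1 : C c * pderiv k u = (∑ l, b l * pderiv l u) * pderiv k F := by
        rw [← hb, Finset.sum_mul, Finset.sum_mul]
        apply Finset.sum_congr rfl
        intro l _
        calc b l * pderiv l F * pderiv k u
            = b l * (pderiv k u * pderiv l F) := by ring
          _ = b l * (pderiv l u * pderiv k F) := by rw [← hsym k l]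
          _ = b l * pderiv l u * pderiv k F := by ring
      calc pderiv k u = C c⁻¹ * (C c * pderiv k u) := by
            rw [← mul_assoc, ← C_mul, inv_mul_cancel₀ hc, C_1, one_mul]
        _ = C c⁻¹ * ((∑ l, b l * pderiv l u) * pderiv k F) := by rw [h1]
        _ = v * pderiv k F := by rw [hv]; ring
    have humem : u ∈ Algebra.adjoin K {F} :=
      IH u.totalDegree (lt_of_lt_of_le hdu hdeg) u v le_rfl hvrel
    rw [Algebra.adjoin_singleton_eq_range_aeval] at humem
    obtain ⟨p, hp⟩ := (AlgHom.mem_range _).mp humem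
    set P : Polynomial K := p.sum fun e a => Polynomial.C (a / (e + 1)) * Polynomial.X ^ (e + 1)
      with hP
    have hPd : Polynomial.derivative P = p := by
      rw [hP, Polynomial.sum_def, map_sum]
      have hterm : ∀ e ∈ p.support,
          Polynomial.derivative (Polynomial.C (p.coeff e / ((e : K) + 1)) * Polynomial.X ^ (e + 1))
          = Polynomial.C (p.coeff e) * Polynomial.X ^ e := by
        intro e _
        rw [Polynomial.derivative_C_mul_X_pow]
        have hc1 : ((e + 1 : ℕ) : K) = (e : K) + 1 := by push_cast; ring
        rw [Nat.add_sub_cancel, hc1, div_mul_cancel₀ _ (Nat.cast_add_one_ne_zero e)]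
      rw [Finset.sum_congr rfl hterm]
      exact Polynomial.sum_C_mul_X_pow_eq p
    have hchain : ∀ k, pderiv k (Polynomial.aeval F P)
        = Polynomial.aeval F (Polynomial.derivative P) * pderiv k F := by
      intro k
      rw [Polynomial.aeval_def, ← Polynomial.eval_map, Polynomial.aeval_def,
        ← Polynomial.eval_map, ← Polynomial.derivative_map]
      exact derivation_eval (pderiv k) _ F (fun m => by
        rw [Polynomial.coeff_map]
        exact Derivation.map_algebraMap _ _)
    have hzero : ∀ k, pderiv k (G - Polynomial.aeval F P) = 0 := by
      intro k
      rw [map_sub, hrel k, hchain k, hPd, hp, sub_self]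
    have hGC := eq_C_of_pderiv_eq_zero hzero
    have hG : G = Polynomial.aeval F P + C (coeff 0 (G - Polynomial.aeval F P)) := by
      rw [← hGC]; ring
    rw [hG]
    refine Subalgebra.add_mem _ ?_ ?_
    · rw [Algebra.adjoin_singleton_eq_range_aeval]
      exact ⟨P, rfl⟩
    · rw [← MvPolynomial.algebraMap_eq]
      exact Subalgebra.algebraMap_mem _ _



lemma derivation_finset_sum_apply {K : Type*} [CommRing K] {A : Type*} [CommRing A] [Algebra K A]
    {ι : Type*} (s : Finset ι) (D : ι → Derivation K A A) (a : A) :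
    (∑ i ∈ s, D i) a = ∑ i ∈ s, D i a := by
  classical
  induction s using Finset.cons_induction with
  | empty => simp
  | cons i s hi ih => rw [Finset.sum_cons, Finset.sum_cons, Derivation.add_apply, ih]

lemma field_case {K : Type*} [Field K] [CharZero K] {n : ℕ}
    (F : Fin n → MvPolynomial (Fin n) K) {c : K} (hc : c ≠ 0)
    (hdet : (Matrix.of fun i j => pderiv j (F i)).det = C c) (i : Fin n)
    (G : MvPolynomial (Fin n) K)
    (hint : ∃ q : Polynomial (MvPolynomial (Fin n) K), q.Monic ∧
      (∀ m, q.coeff m ∈ Algebra.adjoin K {F i}) ∧ q.eval G = 0) :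
    G ∈ Algebra.adjoin K {F i} := by
  classical
  set J : Matrix (Fin n) (Fin n) (MvPolynomial (Fin n) K) :=
    Matrix.of fun i j => pderiv j (F i) with hJ
  set D : Fin n → Derivation K (MvPolynomial (Fin n) K) (MvPolynomial (Fin n) K) :=
    fun j => ∑ k, J.adjugate k j • pderiv k with hD
  have hDapp : ∀ (j : Fin n) (h : MvPolynomial (Fin n) K),
      D j h = ∑ k, J.adjugate k j * pderiv k h := by
    intro j h
    rw [hD, derivation_finset_sum_apply]
    apply Finset.sum_congr rfl
    intro k _
    rw [Derivation.smul_apply, smul_eq_mul]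
  have hJapp : ∀ (l k : Fin n), J l k = pderiv k (F l) := fun l k => rfl
  have hDF : ∀ l j, D j (F l) = if l = j then C c else 0 := by
    intro l j
    rw [hDapp]
    have e : ∑ k, J.adjugate k j * pderiv k (F l) = (J * J.adjugate) l j := by
      rw [Matrix.mul_apply]
      apply Finset.sum_congr rfl
      intro k _
      rw [mul_comm, hJapp]
    rw [e, Matrix.mul_adjugate, hdet, Matrix.smul_apply, Matrix.one_apply]
    by_cases h : l = j
    · rw [if_pos h, if_pos h, smul_eq_mul, mul_one]
    · rw [if_neg h, if_neg h, smul_eq_mul, mul_zero]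
  have hker : ∀ j, j ≠ i → ∀ s ∈ Algebra.adjoin K {F i}, D j s = 0 := by
    intro j hj s hs
    have heq : Set.EqOn (D j) (0 : Derivation K (MvPolynomial (Fin n) K)
        (MvPolynomial (Fin n) K)) {F i} := by
      intro x hx
      rw [Set.mem_singleton_iff] at hx
      subst hx
      have h0 := hDF i j
      rw [if_neg (fun h => hj h.symm)] at h0
      simpa using h0
    have h1 := Derivation.eqOn_adjoin heq (SetLike.mem_coe.mpr hs)
    simpa using h1
  have hDjG : ∀ j, j ≠ i → D j G = 0 := fun j hj =>
    deriv_zero_of_integral (D j) _ (hker j hj) G hint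
  have hkey : ∀ k, C c * pderiv k G = D i G * pderiv k (F i) := by
    intro k
    have h1 : ∑ j, D j G * J j k = C c * pderiv k G := by
      have e1 : ∀ j : Fin n, D j G * J j k = ∑ l, J.adjugate l j * pderiv l G * J j k := by
        intro j
        rw [hDapp, Finset.sum_mul]
      rw [Finset.sum_congr rfl (fun j _ => e1 j), Finset.sum_comm]
      have e2 : ∀ l : Fin n, (∑ j, J.adjugate l j * pderiv l G * J j k)
          = pderiv l G * ((J.adjugate * J) l k) := by
        intro l
        rw [Matrix.mul_apply, Finset.mul_sum]
        apply Finset.sum_congr rfl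
        intro j _
        ring
      rw [Finset.sum_congr rfl (fun l _ => e2 l), Matrix.adjugate_mul, hdet]
      have e3 : (∑ l, pderiv l G * (((C c : MvPolynomial (Fin n) K) • (1 : Matrix (Fin n) (Fin n)
          (MvPolynomial (Fin n) K))) l k)) = pderiv k G * (((C c : MvPolynomial (Fin n) K) • (1 : Matrix (Fin n) (Fin n)
          (MvPolynomial (Fin n) K))) k k) := by
        apply Finset.sum_eq_single k
        · intro l _ hl
          rw [Matrix.smul_apply, Matrix.one_apply_ne hl, smul_zero, mul_zero]
        · intro h
          exact absurd (Finset.mem_univ k) h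
      rw [e3, Matrix.smul_apply, Matrix.one_apply_eq, smul_eq_mul, mul_one, mul_comm]
    have h2 : ∑ j, D j G * J j k = D i G * J i k := by
      apply Finset.sum_eq_single i
      · intro j _ hj
        rw [hDjG j hj, zero_mul]
      · intro h
        exact absurd (Finset.mem_univ i) h
    rw [← h1, h2, hJapp]
  have hb : ∑ k, J.adjugate k i * pderiv k (F i) = C c := by
    have e : ∑ k, J.adjugate k i * pderiv k (F i) = (J * J.adjugate) i i := by
      rw [Matrix.mul_apply]
      apply Finset.sum_congr rfl
      intro k _
      rw [mul_comm, hJapp]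
    rw [e, Matrix.mul_adjugate, hdet, Matrix.smul_apply, Matrix.one_apply_eq, smul_eq_mul, mul_one]
  have hrel : ∀ k, pderiv k G = (C c⁻¹ * D i G) * pderiv k (F i) := by
    intro k
    calc pderiv k G = C c⁻¹ * (C c * pderiv k G) := by
          rw [← mul_assoc, ← C_mul, inv_mul_cancel₀ hc, C_1, one_mul]
      _ = C c⁻¹ * (D i G * pderiv k (F i)) := by rw [hkey k]
      _ = (C c⁻¹ * D i G) * pderiv k (F i) := by ring
  exact mem_adjoin_of_pderiv_rel (F i) (fun k => J.adjugate k i) hc hb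
    G.totalDegree G _ le_rfl hrel


end ClosedAux

open ClosedAux in
/-- **Proposition 2.2.** Let `R` be an integral domain of characteristic zero and
`f_1, …, f_n ∈ R[x_1,…,x_n]` with `det J(F) ∈ R \ {0}` a nonzero constant and
`Q(R)[f_i] ∩ R[X] = R[f_i]` for each `i`.  Then each `f_i` is a closed polynomial. -/
theorem closed_of_jacobian_det_nonzero_constant
    (R : Type*) [CommRing R] [IsDomain R] [CharZero R] (n : ℕ)
    (f : Fin n → MvPolynomial (Fin n) R)
    (hjac : ∃ r : R, r ≠ 0 ∧ (Matrix.of fun i j => pderiv j (f i)).det = C r)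
    (hcap : ∀ i : Fin n, ∀ g : MvPolynomial (Fin n) R,
      MvPolynomial.map (algebraMap R (FractionRing R)) g ∈
          Algebra.adjoin (FractionRing R)
            {MvPolynomial.map (algebraMap R (FractionRing R)) (f i)} →
        g ∈ Algebra.adjoin R {f i}) :
    ∀ i : Fin n, ∀ g : MvPolynomial (Fin n) R,
      IsIntegral (Algebra.adjoin R {f i}) g → g ∈ Algebra.adjoin R {f i} := by
  classical
  intro i g hgint
  haveI : CharZero (FractionRing R) :=
    charZero_of_injective_algebraMap (IsFractionRing.injective R (FractionRing R))
  obtain ⟨r, hr, hdet⟩ := hjac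
  have hc : algebraMap R (FractionRing R) r ≠ 0 := fun h0 =>
    hr (IsFractionRing.injective R (FractionRing R) (by rw [h0, map_zero]))
  have hdet2 : (Matrix.of fun i' j =>
        pderiv j (MvPolynomial.map (algebraMap R (FractionRing R)) (f i'))).det
      = C (algebraMap R (FractionRing R) r) := by
    have hmat : (Matrix.of fun i' j =>
          pderiv j (MvPolynomial.map (algebraMap R (FractionRing R)) (f i')))
        = ((Matrix.of fun i' j => pderiv j (f i')).map
            (MvPolynomial.map (algebraMap R (FractionRing R)))) := by
      refine Matrix.ext fun i' j => ?_
      simp only [Matrix.map_apply, Matrix.of_apply]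
      exact pderiv_map (φ := algebraMap R (FractionRing R)) (f := f i') (i := j)
    have hmm : ((Matrix.of fun i' j => pderiv j (f i')).map
          (MvPolynomial.map (algebraMap R (FractionRing R))))
        = (MvPolynomial.map (algebraMap R (FractionRing R))).mapMatrix
            (Matrix.of fun i' j => pderiv j (f i')) := rfl
    rw [hmat, hmm, ← RingHom.map_det, hdet, MvPolynomial.map_C]
  -- integrality data
  obtain ⟨p, pmonic, hp⟩ := hgint
  set q0 : Polynomial (MvPolynomial (Fin n) R) :=
    p.map (algebraMap (Algebra.adjoin R {f i}) (MvPolynomial (Fin n) R)) with hq0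
  have hq0eval : q0.eval g = 0 := by
    rw [hq0, Polynomial.eval_map]
    exact hp
  have hq0coeff : ∀ m, q0.coeff m ∈ Algebra.adjoin R {f i} := by
    intro m
    rw [hq0, Polynomial.coeff_map]
    exact (p.coeff m).2
  have hmapmem : ∀ x ∈ Algebra.adjoin R {f i},
      MvPolynomial.map (algebraMap R (FractionRing R)) x ∈
        Algebra.adjoin (FractionRing R)
          {MvPolynomial.map (algebraMap R (FractionRing R)) (f i)} := by
    intro x hx
    induction hx using Algebra.adjoin_induction with
    | mem y hy =>
      rw [Set.mem_singleton_iff] at hy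
      subst hy
      exact Algebra.subset_adjoin rfl
    | algebraMap r' =>
      rw [MvPolynomial.algebraMap_eq, MvPolynomial.map_C, ← MvPolynomial.algebraMap_eq]
      exact Subalgebra.algebraMap_mem _ _
    | add x y hx hy ihx ihy =>
      rw [map_add]
      exact Subalgebra.add_mem _ ihx ihy
    | mul x y hx hy ihx ihy =>
      rw [map_mul]
      exact Subalgebra.mul_mem _ ihx ihy
  set q : Polynomial (MvPolynomial (Fin n) (FractionRing R)) :=
    q0.map (MvPolynomial.map (algebraMap R (FractionRing R))) with hq
  have hqmonic : q.Monic := (pmonic.map _).map _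
  have hqcoeff : ∀ m, q.coeff m ∈ Algebra.adjoin (FractionRing R)
      {MvPolynomial.map (algebraMap R (FractionRing R)) (f i)} := by
    intro m
    rw [hq, Polynomial.coeff_map]
    exact hmapmem _ (hq0coeff m)
  have hqeval : q.eval (MvPolynomial.map (algebraMap R (FractionRing R)) g) = 0 := by
    rw [hq, Polynomial.eval_map, Polynomial.eval₂_hom, hq0eval, map_zero]
  exact hcap i g (field_case (fun j => MvPolynomial.map (algebraMap R (FractionRing R)) (f j))
    hc hdet2 i _ ⟨q, hqmonic, hqcoeff, hqeval⟩)
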